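/- arXiv:1304.1548 — 3 statements merged into one kernel-verified Lean document; each statement's English description precedes it below -/
import Mathlib

section
/- For every n-vertex graph G with edge density p and every constant formulation, the frequency x₃ of the 3-node path as an induced subgraph satisfies x₃ ≤ 3p(1−p) + c/n for some absolute constant c; in particular s(P₃,G) ≤ 3/4 + o(1) as n → ∞. -/
open scoped Classical

/-- The induced subgraph frequency `s(F,G)`: the probability that a uniformly random
`|V(F)|`-element subset of the vertices of `G` induces a subgraph isomorphic to `F`. -/
noncomputable def subgraphFreq {V W : Type*} [Fintype V] [Fintype W]
    (F : SimpleGraph V) (G : SimpleGraph W) : ℝ :=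
  (((Finset.univ : Finset W).powersetCard (Fintype.card V)).filter
      (fun S => Nonempty (G.induce (↑S : Set W) ≃g F))).card /
    ((Fintype.card W).choose (Fintype.card V))
/-- The four 3-vertex graphs, with 0, 1, 2, 3 edges respectively. -/
def E0 : SimpleGraph (Fin 3) := ⊥
def E1 : SimpleGraph (Fin 3) := SimpleGraph.fromRel (fun a b => a = 0 ∧ b = 1)
def P3 : SimpleGraph (Fin 3) :=
  SimpleGraph.fromRel (fun a b => (a = 0 ∧ b = 1) ∨ (a = 1 ∧ b = 2))
def E3 : SimpleGraph (Fin 3) := ⊤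

namespace Stmt5Aux
open Finset

lemma p3adj (a b : Fin 3) : P3.Adj a b ↔ a ≠ b ∧
    ((a = 0 ∧ b = 1) ∨ (a = 1 ∧ b = 2) ∨ (b = 0 ∧ a = 1) ∨ (b = 1 ∧ a = 2)) := by
  simp [P3, SimpleGraph.fromRel_adj]; tauto

lemma extract {n : ℕ} (G : SimpleGraph (Fin n)) (S : Finset (Fin n)) (hS : S.card = 3)
    (h : Nonempty (G.induce (↑S : Set (Fin n)) ≃g P3)) :
    ∃ x c y : Fin n, x ≠ c ∧ c ≠ y ∧ x ≠ y ∧ S = {x, c, y} ∧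
      G.Adj x c ∧ G.Adj c y ∧ ¬ G.Adj x y := by
  obtain ⟨e⟩ := h
  have hne : ∀ a b : Fin 3, a ≠ b → ((e.symm a : Fin n) ≠ (e.symm b : Fin n)) := by
    intro a b hab h
    exact hab (e.symm.injective (Subtype.ext h))
  have hadj : ∀ a b : Fin 3, G.Adj (e.symm a) (e.symm b) ↔ P3.Adj a b := by
    intro a b
    have := e.symm.map_adj_iff (v := a) (w := b)
    simpa [SimpleGraph.comap_adj] using this
  have hmem : ∀ a : Fin 3, ((e.symm a : Fin n)) ∈ S := fun a => (e.symm a).2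
  refine ⟨e.symm 0, e.symm 1, e.symm 2, hne 0 1 (by decide), hne 1 2 (by decide),
    hne 0 2 (by decide), ?_, (hadj 0 1).2 (by rw [p3adj]; decide),
    (hadj 1 2).2 (by rw [p3adj]; decide), fun h => by
      have := (hadj 0 2).1 h; rw [p3adj] at this; exact absurd this (by decide)⟩
  · refine (Finset.eq_of_subset_of_card_le ?_ ?_).symm
    · intro z hz
      simp only [Finset.mem_insert, Finset.mem_singleton] at hz
      rcases hz with h|h|h <;> exact h ▸ hmem _
    · rw [hS, Finset.card_insert_of_notMem (by simp only [Finset.mem_insert, Finset.mem_singleton]; push_neg; exact ⟨hne 0 1 (by decide), hne 0 2 (by decide)⟩), Finset.card_insert_of_notMem (by simpa using hne 1 2 (by decide)), Finset.card_singleton]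

lemma finset_pair_eq {α : Type*} [DecidableEq α] {x y a b : α} (hxy : x ≠ y)
    (h : ({x, y} : Finset α) = {a, b}) : (x = a ∧ y = b) ∨ (x = b ∧ y = a) := by
  have hx : x ∈ ({a, b} : Finset α) := h ▸ (by simp)
  have hy : y ∈ ({a, b} : Finset α) := h ▸ (by simp)
  simp only [mem_insert, mem_singleton] at hx hy
  rcases hx with hx|hx <;> rcases hy with hy|hy <;> try tauto
  · exact absurd (hx.trans hy.symm) hxy
  · exact absurd (hx.trans hy.symm) hxy

lemma k2_char {n : ℕ} (G : SimpleGraph (Fin n)) (S : Finset (Fin n)) (hS : S.card = 2) :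
    Nonempty (G.induce (↑S : Set (Fin n)) ≃g (⊤ : SimpleGraph (Fin 2))) ↔
      ∃ a b, G.Adj a b ∧ S = {a, b} := by
  constructor
  · rintro ⟨e⟩
    refine ⟨e.symm 0, e.symm 1, ?_, ?_⟩
    · have := e.symm.map_adj_iff (v := (0 : Fin 2)) (w := 1)
      simp only [SimpleGraph.comap_adj, SimpleGraph.top_adj] at this ⊢
      exact this.2 (by decide)
    · refine (Finset.eq_of_subset_of_card_le ?_ ?_).symm
      · intro z hz
        simp only [Finset.mem_insert, Finset.mem_singleton] at hz
        rcases hz with h|h <;> exact h ▸ (e.symm _).2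
      · rw [hS, Finset.card_insert_of_notMem (by
          simp only [Finset.mem_singleton]
          intro h
          exact absurd (e.symm.injective (Subtype.ext h)) (by decide)), Finset.card_singleton]
  · rintro ⟨a, b, hab, rfl⟩
    have hne : a ≠ b := hab.ne
    have ha : a ∈ (↑({a,b} : Finset (Fin n)) : Set (Fin n)) := by simp
    have hb : b ∈ (↑({a,b} : Finset (Fin n)) : Set (Fin n)) := by simp
    refine ⟨⟨⟨fun z => if (z : Fin n) = a then 0 else 1,
      fun i => if i = 0 then ⟨a, ha⟩ else ⟨b, hb⟩, ?_, ?_⟩, ?_⟩⟩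
    · rintro ⟨z, hz⟩
      have : z = a ∨ z = b := by simpa using hz
      rcases this with rfl|rfl
      · simp
      · simp [hne.symm]
    · intro i
      fin_cases i <;> simp [hne.symm]
    · rintro ⟨z, hz⟩ ⟨w, hw⟩
      have hz' : z = a ∨ z = b := by simpa using hz
      have hw' : w = a ∨ w = b := by simpa using hw
      simp only [Equiv.coe_fn_mk, SimpleGraph.top_adj, SimpleGraph.comap_adj,
        Function.Embedding.coe_subtype]
      rcases hz' with rfl|rfl <;> rcases hw' with rfl|rfl
      · simp [hne, hne.symm]
      · simp [hne, hne.symm]; exact hab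
      · simp [hne, hne.symm]; exact hab.symm
      · simp [hne, hne.symm]

section
variable {n : ℕ} (G : SimpleGraph (Fin n))

noncomputable def Epairs : Finset (Fin n × Fin n) := univ.filter fun p => G.Adj p.1 p.2

noncomputable def K2sets : Finset (Finset (Fin n)) :=
  (univ.powersetCard 2).filter fun S =>
    Nonempty (G.induce (↑S : Set (Fin n)) ≃g (⊤ : SimpleGraph (Fin 2)))

noncomputable def P3sets : Finset (Finset (Fin n)) :=
  (univ.powersetCard 3).filter fun S => Nonempty (G.induce (↑S : Set (Fin n)) ≃g P3)

noncomputable def Wset (u v : Fin n) : Finset (Fin n) :=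
  univ.filter fun w => w ≠ u ∧ w ≠ v ∧ Xor' (G.Adj u w) (G.Adj v w)

noncomputable def Tset : Finset ((Fin n × Fin n) × Fin n) :=
  univ.filter fun t => G.Adj t.1.1 t.1.2 ∧ t.2 ≠ t.1.1 ∧ t.2 ≠ t.1.2 ∧
    Xor' (G.Adj t.1.1 t.2) (G.Adj t.1.2 t.2)

lemma filter_coe_card {α : Type*} (s : Finset (Finset α)) (Q : Set α → Prop) :
    (s.filter fun S => Q (↑S : Set α)).card =
      (s.filter fun a : Finset α => Q (SetLike.coe a)).card := by
  have h1 : (Bind.bind (m := Finset) s (fun a : Finset α => Pure.pure (a : Set α))) =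
      s.image (fun a : Finset α => (a : Set α)) := Finset.sup_singleton_apply _ _
  erw [h1, Finset.filter_image]
  exact Finset.card_image_of_injective _ Finset.coe_injective

lemma freqP3 : subgraphFreq P3 G = ((P3sets G).card : ℝ) / ((n.choose 3 : ℕ) : ℝ) := by
  rw [subgraphFreq, P3sets, Fintype.card_fin, Fintype.card_fin]
  rw [filter_coe_card]

lemma freqK2 : subgraphFreq (⊤ : SimpleGraph (Fin 2)) G =
    ((K2sets G).card : ℝ) / ((n.choose 2 : ℕ) : ℝ) := by
  rw [subgraphFreq, K2sets, Fintype.card_fin, Fintype.card_fin]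
  rw [filter_coe_card]

lemma epairs_card : (Epairs G).card = ∑ v, G.degree v := by
  rw [Finset.card_eq_sum_card_fiberwise (f := Prod.fst) (t := univ) (fun x _ => mem_univ _)]
  refine Finset.sum_congr rfl fun v _ => ?_
  rw [← SimpleGraph.card_neighborFinset_eq_degree]
  refine Finset.card_bij' (fun p _ => p.2) (fun w _ => (v, w)) ?_ ?_ ?_ ?_
  · rintro ⟨a, b⟩ hp
    simp only [Epairs, mem_filter, mem_univ, true_and] at hp
    obtain ⟨h1, h2⟩ := hp
    subst h2
    simpa using h1
  · intro w hw
    simp only [SimpleGraph.mem_neighborFinset] at hw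
    simp [Epairs, hw]
  · rintro ⟨a, b⟩ hp
    simp only [Epairs, mem_filter, mem_univ, true_and] at hp
    simp [hp.2]
  · intro w hw; rfl

lemma epairs_sum {M : Type*} [AddCommMonoid M] (f : Fin n → Fin n → M) :
    ∑ p ∈ Epairs G, f p.1 p.2 = ∑ v, ∑ w ∈ G.neighborFinset v, f v w := by
  rw [Epairs, Finset.sum_filter, Fintype.sum_prod_type]
  refine Finset.sum_congr rfl fun v _ => ?_
  rw [show G.neighborFinset v = univ.filter (G.Adj v) from by ext w; simp, Finset.sum_filter]

lemma epairs_fst_deg : ∑ p ∈ Epairs G, G.degree p.1 = ∑ v, (G.degree v)^2 := by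
  rw [show ∑ p ∈ Epairs G, G.degree p.1 = ∑ v, ∑ _w ∈ G.neighborFinset v, G.degree v from
    epairs_sum G fun v _ => G.degree v]
  refine Finset.sum_congr rfl fun v _ => ?_
  rw [Finset.sum_const, smul_eq_mul, SimpleGraph.card_neighborFinset_eq_degree, sq]

lemma epairs_snd_deg : ∑ p ∈ Epairs G, G.degree p.2 = ∑ v, (G.degree v)^2 := by
  rw [← epairs_fst_deg]
  refine Finset.sum_nbij' (fun p => (p.2, p.1)) (fun p => (p.2, p.1)) ?_ ?_ ?_ ?_ ?_
  · rintro ⟨a,b⟩ h; simp only [Epairs, mem_filter, mem_univ, true_and] at h ⊢; exact h.symm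
  · rintro ⟨a,b⟩ h; simp only [Epairs, mem_filter, mem_univ, true_and] at h ⊢; exact h.symm
  · rintro ⟨a,b⟩ _; rfl
  · rintro ⟨a,b⟩ _; rfl
  · rintro ⟨a,b⟩ _; rfl

lemma k2sets_two_mul : 2 * (K2sets G).card = (Epairs G).card := by
  have memb : ∀ p ∈ Epairs G, ({p.1, p.2} : Finset (Fin n)) ∈ K2sets G := by
    rintro ⟨a, b⟩ hp
    simp only [Epairs, mem_filter, mem_univ, true_and] at hp
    simp only [K2sets, mem_filter, mem_powersetCard]
    refine ⟨⟨subset_univ _, ?_⟩, (k2_char G _ ?_).2 ⟨a, b, hp, rfl⟩⟩ <;>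
      rw [Finset.card_insert_of_notMem (by simpa using hp.ne), Finset.card_singleton]
  have key := Finset.card_eq_sum_card_fiberwise (s := Epairs G)
      (f := fun p => ({p.1, p.2} : Finset (Fin n))) (t := K2sets G) (fun p hp => memb p hp)
  have fib : ∀ S ∈ K2sets G,
      ((Epairs G).filter (fun p => ({p.1, p.2} : Finset (Fin n)) = S)).card = 2 := by
    intro S hS
    simp only [K2sets, mem_filter, mem_powersetCard] at hS
    obtain ⟨a, b, hab, rfl⟩ := (k2_char G S hS.1.2).1 hS.2
    have : (Epairs G).filter (fun p => ({p.1, p.2} : Finset (Fin n)) = {a, b}) =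
        {(a, b), (b, a)} := by
      ext ⟨x, y⟩
      simp only [Epairs, mem_filter, mem_univ, true_and, mem_insert, mem_singleton,
        Prod.mk.injEq]
      constructor
      · rintro ⟨hxy, hset⟩
        rcases finset_pair_eq hxy.ne hset with ⟨rfl, rfl⟩|⟨rfl, rfl⟩ <;> tauto
      · rintro (⟨rfl, rfl⟩|⟨rfl, rfl⟩)
        · exact ⟨hab, rfl⟩
        · exact ⟨hab.symm, Finset.pair_comm _ _⟩
    rw [this, Finset.card_insert_of_notMem
      (by simp [Prod.ext_iff]; intro h; exact absurd h hab.ne), Finset.card_singleton]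
  rw [key, Finset.sum_congr rfl fib, Finset.sum_const, smul_eq_mul, mul_comm]

lemma tset_card : (Tset G).card = ∑ p ∈ Epairs G, (Wset G p.1 p.2).card := by
  have memb : ∀ t ∈ Tset G, t.1 ∈ Epairs G := by
    rintro ⟨⟨u, v⟩, w⟩ ht
    simp only [Tset, mem_filter, mem_univ, true_and] at ht
    simp [Epairs, ht.1]
  rw [Finset.card_eq_sum_card_fiberwise (f := Prod.fst) (t := Epairs G) memb]
  refine Finset.sum_congr rfl fun ⟨u, v⟩ hp => ?_
  simp only [Epairs, mem_filter, mem_univ, true_and] at hp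
  refine Finset.card_bij' (fun t _ => t.2) (fun w _ => ((u, v), w)) ?_ ?_ ?_ ?_
  · rintro ⟨⟨a, b⟩, w⟩ ht
    simp only [Tset, mem_filter, mem_univ, true_and] at ht
    obtain ⟨⟨h1, h2, h3, h4⟩, h5⟩ := ht
    cases h5
    simp only [Wset, mem_filter, mem_univ, true_and]
    exact ⟨h2, h3, h4⟩
  · intro w hw
    simp only [Wset, mem_filter, mem_univ, true_and] at hw
    refine Finset.mem_filter.2 ⟨?_, rfl⟩
    simp only [Tset, mem_filter, mem_univ, true_and]
    exact ⟨hp, hw.1, hw.2.1, hw.2.2⟩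
  · rintro ⟨⟨a, b⟩, w⟩ ht
    simp only [Tset, mem_filter, mem_univ, true_and] at ht
    obtain ⟨_, h5⟩ := ht
    cases h5
    rfl
  · intro w hw; rfl

lemma wset_bound {u v : Fin n} (huv : G.Adj u v) :
    (Wset G u v).card + 2 + G.degree u + G.degree v ≤ 2 * n := by
  classical
  set A := G.neighborFinset u
  set B := G.neighborFinset v
  have hW : Wset G u v = ((A ∪ B) \ (A ∩ B)) \ {u, v} := by
    ext w
    rw [Wset, Finset.mem_filter]
    simp only [Wset, mem_filter, mem_univ, true_and, mem_sdiff, mem_union, mem_inter,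
      mem_insert, mem_singleton, SimpleGraph.mem_neighborFinset, A, B, Xor', Xor]
    tauto
  have hsub1 : ({u, v} : Finset (Fin n)) ⊆ (A ∪ B) \ (A ∩ B) := by
    intro z hz
    simp only [mem_insert, mem_singleton] at hz
    simp only [mem_sdiff, mem_union, mem_inter, SimpleGraph.mem_neighborFinset, A, B]
    rcases hz with rfl|rfl
    · exact ⟨Or.inr huv.symm, fun h => G.irrefl h.1⟩
    · exact ⟨Or.inl huv, fun h => G.irrefl h.2⟩
  have hsub2 : A ∩ B ⊆ A ∪ B := Finset.inter_subset_union
  have h1 := Finset.card_sdiff_add_card_eq_card hsub1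
  have h2 := Finset.card_sdiff_add_card_eq_card hsub2
  have h3 := Finset.card_union_add_card_inter A B
  have h4 : (A ∪ B).card ≤ n := le_trans (Finset.card_le_univ _) (by simp)
  have h5 : ({u, v} : Finset (Fin n)).card = 2 := by
    rw [Finset.card_insert_of_notMem (by simpa using huv.ne), Finset.card_singleton]
  have hdu : G.degree u = A.card := (SimpleGraph.card_neighborFinset_eq_degree G u).symm
  have hdv : G.degree v = B.card := (SimpleGraph.card_neighborFinset_eq_degree G v).symm
  rw [hW, hdu, hdv]
  omega

lemma sum_fiber_le {α β : Type*} [DecidableEq α] [DecidableEq β] (s : Finset α) (t : Finset β)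
    (f : α → β) : ∑ b ∈ t, (s.filter fun a => f a = b).card ≤ s.card := by
  rw [← Finset.card_biUnion (fun b _ c _ hbc => Finset.disjoint_left.2
    (fun a ha1 ha2 => hbc ((Finset.mem_filter.1 ha1).2 ▸ (Finset.mem_filter.1 ha2).2 ▸ rfl)))]
  refine Finset.card_le_card fun a ha => ?_
  obtain ⟨b, _, hab⟩ := Finset.mem_biUnion.1 ha
  exact (Finset.mem_filter.1 hab).1

lemma four_mul_le : 4 * (P3sets G).card ≤ (Tset G).card := by
  have fib : ∀ S ∈ P3sets G,
      4 ≤ ((Tset G).filter fun t => ({t.1.1, t.1.2, t.2} : Finset (Fin n)) = S).card := by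
    intro S hS
    simp only [P3sets, mem_filter, mem_powersetCard] at hS
    obtain ⟨x, c, y, hxc, hcy, hxy, rfl, axc, acy, nxy⟩ := extract G S hS.1.2 hS.2
    have hmem : ({((x, c), y), ((c, x), y), ((c, y), x), ((y, c), x)} :
        Finset ((Fin n × Fin n) × Fin n)) ⊆
        (Tset G).filter fun t => ({t.1.1, t.1.2, t.2} : Finset (Fin n)) = {x, c, y} := by
      intro t ht
      simp only [mem_insert, mem_singleton] at ht
      have hT : ∀ u v w : Fin n, G.Adj u v → w ≠ u → w ≠ v → Xor' (G.Adj u w) (G.Adj v w) →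
          ((u, v), w) ∈ Tset G := by
        intro u v w h1 h2 h3 h4
        simp only [Tset, mem_filter, mem_univ, true_and]
        exact ⟨h1, h2, h3, h4⟩
      rcases ht with rfl|rfl|rfl|rfl <;> refine Finset.mem_filter.2 ⟨?_, ?_⟩
      · exact hT _ _ _ axc (Ne.symm hxy) (Ne.symm hcy) (Or.inr ⟨acy, nxy⟩)
      · rfl
      · exact hT _ _ _ axc.symm (Ne.symm hcy) (Ne.symm hxy) (Or.inl ⟨acy, nxy⟩)
      · ext z; simp; tauto
      · exact hT _ _ _ acy hxc hxy (Or.inl ⟨axc.symm, fun h => nxy h.symm⟩)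
      · ext z; simp; tauto
      · exact hT _ _ _ acy.symm hxy hxc (Or.inr ⟨axc.symm, fun h => nxy h.symm⟩)
      · ext z; simp; tauto
    have hcard : ({((x, c), y), ((c, x), y), ((c, y), x), ((y, c), x)} :
        Finset ((Fin n × Fin n) × Fin n)).card = 4 := by
      rw [Finset.card_insert_of_notMem (by simp [Prod.ext_iff]; tauto),
        Finset.card_insert_of_notMem (by simp [Prod.ext_iff]; tauto),
        Finset.card_insert_of_notMem (by simp [Prod.ext_iff]; tauto),
        Finset.card_singleton]
    calc 4 = _ := hcard.symm
    _ ≤ _ := Finset.card_le_card hmem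
  calc 4 * (P3sets G).card = ∑ _S ∈ P3sets G, 4 := by
        rw [Finset.sum_const, smul_eq_mul, mul_comm]
  _ ≤ ∑ S ∈ P3sets G, ((Tset G).filter fun t =>
        ({t.1.1, t.1.2, t.2} : Finset (Fin n)) = S).card := Finset.sum_le_sum fib
  _ ≤ (Tset G).card := sum_fiber_le _ _ _

lemma key_nat : 4 * (P3sets G).card + 2 * (Epairs G).card + 2 * ∑ v, (G.degree v)^2 ≤
    2 * n * (Epairs G).card := by
  have hsum : ∑ p ∈ Epairs G, ((Wset G p.1 p.2).card + 2 + G.degree p.1 + G.degree p.2) ≤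
      ∑ _p ∈ Epairs G, 2 * n := by
    refine Finset.sum_le_sum fun p hp => ?_
    simp only [Epairs, mem_filter, mem_univ, true_and] at hp
    exact wset_bound G hp
  rw [Finset.sum_const, smul_eq_mul] at hsum
  simp only [Finset.sum_add_distrib, Finset.sum_const, smul_eq_mul] at hsum
  rw [epairs_fst_deg, epairs_snd_deg, ← tset_card] at hsum
  have h4 := four_mul_le G
  calc 4 * (P3sets G).card + 2 * (Epairs G).card + 2 * ∑ v, (G.degree v)^2
      ≤ (Tset G).card + (Epairs G).card * 2 + (∑ v, (G.degree v)^2 + ∑ v, (G.degree v)^2) := by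
        omega
  _ ≤ (Epairs G).card * (2 * n) := by omega
  _ = 2 * n * (Epairs G).card := mul_comm _ _

end

lemma ch2 : ∀ k : ℕ, (k+2).choose 2 * 2 = (k+2)*(k+1) := by
  intro k
  induction k with
  | zero => rfl
  | succ k ih =>
    rw [show k+1+2 = (k+2)+1 from rfl, Nat.choose_succ_succ, Nat.choose_one_right,
      add_mul, ih]
    ring

lemma ch3 : ∀ k : ℕ, (k+3).choose 3 * 6 = (k+3)*(k+2)*(k+1) := by
  intro k
  induction k with
  | zero => rfl
  | succ k ih =>
    rw [show k+1+3 = (k+3)+1 from rfl, Nat.choose_succ_succ, add_mul, ih,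
      show (k+3).choose 2 * 6 = (k+3).choose 2 * 2 * 3 from by ring, ch2 (k+1)]
    ring

set_option maxHeartbeats 800000 in
lemma real_final (K a D s2 F C2 C3 p : ℝ)
    (hK0 : 0 ≤ K)
    (hkey : 4*a + 2*D + 2*s2 ≤ 2*(K+3)*D)
    (cheb : D^2 ≤ (K+3)*s2)
    (hFD : 2*F = D)
    (hC2 : C2 * 2 = (K+3)*(K+2))
    (hC3 : C3 * 6 = (K+3)*(K+2)*(K+1))
    (hFle : F ≤ C2)
    (hF0 : 0 ≤ F) (ha0 : 0 ≤ a) (hs20 : 0 ≤ s2)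
    (hp : p = F / C2) :
    a / C3 ≤ 3*p*(1-p) + 3/(K+3) ∧ a / C3 ≤ 3/4 + 3/(K+3) := by
  have hK3 : (0:ℝ) < K + 3 := by linarith
  have hK2 : (0:ℝ) < K + 2 := by linarith
  have hK1 : (0:ℝ) < K + 1 := by linarith
  have hC2pos : (0:ℝ) < C2 := by nlinarith [mul_pos hK3 hK2]
  have hC3pos : (0:ℝ) < C3 := by nlinarith [mul_pos (mul_pos hK3 hK2) hK1]
  have hp0 : 0 ≤ p := hp ▸ div_nonneg hF0 hC2pos.le
  have hp1 : p ≤ 1 := hp ▸ (div_le_one hC2pos).2 hFle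
  have hpq : p * (1 - p) ≤ 1/4 := by nlinarith [sq_nonneg (p - 1/2)]
  have hF : F = p * C2 := by rw [hp]; field_simp
  have hDp : D = p * ((K+3)*(K+2)) := by linear_combination -hFD + 2*hF + p*hC2
  have h1 : 2*a ≤ (K+2)*D - s2 := by linarith
  have h2 : 2*a*(K+3) ≤ ((K+2)*D - s2)*(K+3) :=
    mul_le_mul_of_nonneg_right h1 hK3.le
  have hmain : 2*a*(K+3) ≤ p*(1-p)*((K+3)^2*(K+2)^2) := by nlinarith [h2, cheb, hDp]
  have hC3' : C3 = (K+3)*(K+2)*(K+1)/6 := by linarith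
  have hX : (3*p*(1-p) + 3/(K+3)) * C3 = 3*p*(1-p)*C3 + (K+2)*(K+1)/2 := by
    rw [hC3']
    field_simp
    ring
  have hbig : 2*(K+3)*a ≤ 2*(K+3)*((3*p*(1-p) + 3/(K+3)) * C3) := by
    rw [hX, hC3']
    nlinarith [hmain, mul_nonneg (sub_nonneg.2 hpq) (by positivity : (0:ℝ) ≤ (K+3)^2*(K+2)),
      (by positivity : (0:ℝ) ≤ (K+3)*(K+2)*(3*K+1))]
  have hnum : a ≤ (3*p*(1-p) + 3/(K+3)) * C3 :=
    le_of_mul_le_mul_left hbig (by linarith)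
  have goal1 : a / C3 ≤ 3*p*(1-p) + 3/(K+3) := (div_le_iff₀ hC3pos).2 hnum
  refine ⟨goal1, le_trans goal1 ?_⟩
  nlinarith [sq_nonneg (p - 1/2)]

end Stmt5Aux

open Finset Stmt5Aux in
set_option maxHeartbeats 1000000 in
/-- There is an absolute constant `c` such that for every n-vertex graph `G` (n ≥ 3)
with edge density `p`, the induced frequency of the 3-node path satisfies
`s(P₃,G) ≤ 3p(1-p) + c/n`; in particular `s(P₃,G) ≤ 3/4 + c/n = 3/4 + o(1)`. -/
theorem stmt5 : ∃ c : ℝ, ∀ (n : ℕ), 3 ≤ n → ∀ G : SimpleGraph (Fin n),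
    subgraphFreq P3 G ≤
        3 * subgraphFreq (⊤ : SimpleGraph (Fin 2)) G *
          (1 - subgraphFreq (⊤ : SimpleGraph (Fin 2)) G) + c / n ∧
    subgraphFreq P3 G ≤ 3/4 + c / n := by
  refine ⟨3, ?_⟩
  intro n hn G
  obtain ⟨k, rfl⟩ : ∃ k, n = k + 3 := ⟨n - 3, by omega⟩
  have hkeyN : 4 * (P3sets G).card + 2 * (∑ v, G.degree v) + 2 * ∑ v, (G.degree v)^2 ≤
      2 * (k+3) * (∑ v, G.degree v) := by
    have := key_nat G
    rwa [epairs_card] at this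
  have hFDN : 2 * (K2sets G).card = ∑ v, G.degree v := by
    have := k2sets_two_mul G
    rwa [epairs_card] at this
  have hFleN : (K2sets G).card ≤ (k+3).choose 2 := by
    calc (K2sets G).card ≤ ((Finset.univ : Finset (Fin (k+3))).powersetCard 2).card :=
          Finset.card_filter_le _ _
    _ = (k+3).choose 2 := by rw [Finset.card_powersetCard, Finset.card_univ, Fintype.card_fin]
  -- real facts
  have hC2 : (((k+3).choose 2 : ℕ) : ℝ) * 2 = ((k:ℝ)+3)*((k:ℝ)+2) := by
    have h := ch2 (k+1)
    have h' : ((k+3).choose 2) * 2 = (k+3)*(k+2) := by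
      rw [show k+3 = (k+1)+2 from rfl, h]; try ring
    calc (((k+3).choose 2 : ℕ) : ℝ) * 2 = (((k+3).choose 2 * 2 : ℕ) : ℝ) := by push_cast; ring
    _ = (((k+3)*(k+2) : ℕ) : ℝ) := by rw [h']
    _ = ((k:ℝ)+3)*((k:ℝ)+2) := by push_cast; ring
  have hC3 : (((k+3).choose 3 : ℕ) : ℝ) * 6 = ((k:ℝ)+3)*((k:ℝ)+2)*((k:ℝ)+1) := by
    have h := ch3 k
    calc (((k+3).choose 3 : ℕ) : ℝ) * 6 = (((k+3).choose 3 * 6 : ℕ) : ℝ) := by push_cast; ring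
    _ = (((k+3)*(k+2)*(k+1) : ℕ) : ℝ) := by rw [h]
    _ = ((k:ℝ)+3)*((k:ℝ)+2)*((k:ℝ)+1) := by push_cast; ring
  have hkeyR : 4*((P3sets G).card:ℝ) + 2*((∑ v, G.degree v : ℕ):ℝ) +
      2*((∑ v, (G.degree v)^2 : ℕ):ℝ) ≤ 2*((k:ℝ)+3)*((∑ v, G.degree v : ℕ):ℝ) := by
    exact_mod_cast hkeyN
  have chebR : ((∑ v, G.degree v : ℕ):ℝ)^2 ≤ ((k:ℝ)+3) * ((∑ v, (G.degree v)^2 : ℕ):ℝ) := by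
    have h := sq_sum_le_card_mul_sum_sq (s := (Finset.univ : Finset (Fin (k+3))))
      (f := fun v => (G.degree v : ℝ))
    rw [Finset.card_univ, Fintype.card_fin] at h
    calc ((∑ v, G.degree v : ℕ):ℝ)^2 = (∑ v, (G.degree v : ℝ))^2 := by push_cast; ring
    _ ≤ ((k+3 : ℕ) : ℝ) * ∑ v, (G.degree v : ℝ)^2 := h
    _ = ((k:ℝ)+3) * ((∑ v, (G.degree v)^2 : ℕ):ℝ) := by push_cast; ring
  have hFDR : 2*(((K2sets G).card:ℕ):ℝ) = ((∑ v, G.degree v : ℕ):ℝ) := by exact_mod_cast hFDN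
  have hFleR : (((K2sets G).card:ℕ):ℝ) ≤ (((k+3).choose 2 : ℕ):ℝ) := by exact_mod_cast hFleN
  have main := real_final ((k:ℝ)) ((P3sets G).card:ℝ) ((∑ v, G.degree v : ℕ):ℝ)
      ((∑ v, (G.degree v)^2 : ℕ):ℝ) (((K2sets G).card:ℕ):ℝ) (((k+3).choose 2 : ℕ):ℝ)
      (((k+3).choose 3 : ℕ):ℝ) ((((K2sets G).card:ℕ):ℝ) / ((((k+3).choose 2 : ℕ)):ℝ))
      (Nat.cast_nonneg k) hkeyR chebR hFDR hC2 hC3 hFleR (Nat.cast_nonneg _)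
      (Nat.cast_nonneg _) (Nat.cast_nonneg _) rfl
  rw [freqP3, freqK2]
  have hcast : (((k+3 : ℕ)):ℝ) = (k:ℝ) + 3 := by push_cast; ring
  constructor
  · rw [show ((k+3 : ℕ):ℝ) = (k:ℝ)+3 from hcast]
    exact main.1
  · rw [show ((k+3 : ℕ):ℝ) = (k:ℝ)+3 from hcast]
    exact main.2
end

section
/- For even n, the induced subgraph frequency of the 3-vertex path in the complete balanced bipartite graph K_{n/2,n/2} tends to 3/4 as n → ∞ (and the edge density tends to 1/2), so the upper bound 3/4 on the asymptotic frequency of the 3-node path is tight. -/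
open scoped Classical

/-! ### Auxiliary lemmas -/

open Filter

lemma subgraphFreq_eq {V W : Type*} [Fintype V] [Fintype W]
    (F : SimpleGraph V) (G : SimpleGraph W) :
    subgraphFreq F G = (((Finset.univ : Finset W).powersetCard (Fintype.card V)).filter
      (fun S : Finset W => Nonempty (G.induce (↑S : Set W) ≃g F))).card /
    ((Fintype.card W).choose (Fintype.card V)) := by
  unfold subgraphFreq
  congr 2
  have hbind : (bind ((Finset.univ : Finset W).powersetCard (Fintype.card V))
      fun a => pure ((↑a : Set W)))
      = ((Finset.univ : Finset W).powersetCard (Fintype.card V)).image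
          (fun a : Finset W => (a : Set W)) := by
    rw [show (bind ((Finset.univ : Finset W).powersetCard (Fintype.card V))
        fun a => pure ((↑a : Set W)))
      = ((Finset.univ : Finset W).powersetCard (Fintype.card V)).sup
          (fun a : Finset W => {(a : Set W)}) from rfl]
    exact Finset.sup_singleton_apply _ _
  rw [hbind, Finset.filter_image, Finset.card_image_of_injective _ Finset.coe_injective]

lemma iso_P3_aux {W : Type*} (G : SimpleGraph W) (S : Finset W) {u v w : W}
    (huv : u ≠ v) (huw : u ≠ w) (hvw : v ≠ w) (hS : S = {u, v, w})
    (a1 : G.Adj u v) (a2 : G.Adj v w) (a3 : ¬ G.Adj u w) :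
    Nonempty (G.induce (↑S : Set W) ≃g P3) := by
  have hu : u ∈ (↑S : Set W) := by simp [hS]
  have hv : v ∈ (↑S : Set W) := by simp [hS]
  have hw : w ∈ (↑S : Set W) := by simp [hS]
  let f : Fin 3 → (↑S : Set W) := ![⟨u, hu⟩, ⟨v, hv⟩, ⟨w, hw⟩]
  have hbij : Function.Bijective f := by
    constructor
    · intro a b hab
      fin_cases a <;> fin_cases b <;>
        simp_all [f, Subtype.ext_iff, huv, huw, hvw, huv.symm, huw.symm, hvw.symm]
    · rintro ⟨x, hx⟩
      simp only [hS, Finset.coe_insert, Set.mem_insert_iff, Finset.coe_singleton,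
        Set.mem_singleton_iff] at hx
      rcases hx with rfl | rfl | rfl
      · exact ⟨0, rfl⟩
      · exact ⟨1, rfl⟩
      · exact ⟨2, rfl⟩
  let e := Equiv.ofBijective f hbij
  refine ⟨(RelIso.mk e ?_).symm⟩
  intro a b
  have he : ∀ i, (e i : W) = (f i : W) := fun i => rfl
  fin_cases a <;> fin_cases b <;>
    simp [e, f, P3, Function.Embedding.coe_subtype, SimpleGraph.fromRel_adj, huv, huw, hvw,
      a1, a2, a3, a1.symm, a2.symm, fun h => a3 (G.adj_symm h), G.irrefl] <;>
    first
      | exact a1 | exact a2 | exact a1.symm | exact a2.symm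
      | exact a3 | exact fun h => a3 h.symm

lemma iso_K2_aux {W : Type*} (G : SimpleGraph W) (S : Finset W) {u v : W}
    (huv : u ≠ v) (hS : S = {u, v}) (a1 : G.Adj u v) :
    Nonempty (G.induce (↑S : Set W) ≃g (⊤ : SimpleGraph (Fin 2))) := by
  have hu : u ∈ (↑S : Set W) := by simp [hS]
  have hv : v ∈ (↑S : Set W) := by simp [hS]
  let f : Fin 2 → (↑S : Set W) := ![⟨u, hu⟩, ⟨v, hv⟩]
  have hbij : Function.Bijective f := by
    constructor
    · intro a b hab
      fin_cases a <;> fin_cases b <;>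
        simp_all [f, Subtype.ext_iff, huv, huv.symm]
    · rintro ⟨x, hx⟩
      simp only [hS, Finset.coe_insert, Set.mem_insert_iff, Finset.coe_singleton,
        Set.mem_singleton_iff] at hx
      rcases hx with rfl | rfl
      · exact ⟨0, rfl⟩
      · exact ⟨1, rfl⟩
  let e := Equiv.ofBijective f hbij
  refine ⟨(RelIso.mk e ?_).symm⟩
  intro a b
  fin_cases a <;> fin_cases b <;>
    simp [e, f, Function.Embedding.coe_subtype, huv, a1, a1.symm, G.irrefl] <;>
    first | exact a1 | exact a1.symm

lemma no_iso_of_no_adj_aux {W : Type*} {n : ℕ} (G : SimpleGraph W) (S : Finset W)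
    (h : ∀ x ∈ S, ∀ y ∈ S, ¬ G.Adj x y) (F : SimpleGraph (Fin n)) {i j : Fin n}
    (hF : F.Adj i j) : ¬ Nonempty (G.induce (↑S : Set W) ≃g F) := by
  rintro ⟨φ⟩
  have h2 : F.Adj (φ (φ.symm i)) (φ (φ.symm j)) := by simpa using hF
  have h3 := φ.map_rel_iff.mp h2
  exact h _ (φ.symm i).2 _ (φ.symm j).2 h3

/-- The "left" side of `Fin m ⊕ Fin m` as a finset. -/
def Lf (m : ℕ) : Finset (Fin m ⊕ Fin m) := Finset.univ.map ⟨Sum.inl, Sum.inl_injective⟩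
/-- The "right" side of `Fin m ⊕ Fin m` as a finset. -/
def Rf (m : ℕ) : Finset (Fin m ⊕ Fin m) := Finset.univ.map ⟨Sum.inr, Sum.inr_injective⟩

lemma count_eq (m k : ℕ) (hk : 0 < k) :
    (((Finset.univ : Finset (Fin m ⊕ Fin m)).powersetCard k).filter
      (fun S => ¬ S ⊆ Lf m ∧ ¬ S ⊆ Rf m)).card + (m.choose k + m.choose k)
      = (m + m).choose k := by
  classical
  have htot : ((Finset.univ : Finset (Fin m ⊕ Fin m)).powersetCard k).card
      = (m + m).choose k := by
    rw [Finset.card_powersetCard]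
    simp
  have hsplit := Finset.card_filter_add_card_filter_not
    (s := (Finset.univ : Finset (Fin m ⊕ Fin m)).powersetCard k)
    (p := fun S => ¬ S ⊆ Lf m ∧ ¬ S ⊆ Rf m)
  have hneg : ((Finset.univ : Finset (Fin m ⊕ Fin m)).powersetCard k).filter
      (fun S => ¬(¬ S ⊆ Lf m ∧ ¬ S ⊆ Rf m))
      = ((Finset.univ : Finset (Fin m ⊕ Fin m)).powersetCard k).filter
        (fun S => S ⊆ Lf m ∨ S ⊆ Rf m) := by
    apply Finset.filter_congr
    intro S _
    constructor
    · intro h; by_contra hc; push_neg at hc; exact h ⟨hc.1, hc.2⟩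
    · intro h hc; rcases h with h | h
      · exact hc.1 h
      · exact hc.2 h
  have hI : ∀ T : Finset (Fin m ⊕ Fin m),
      ((Finset.univ : Finset (Fin m ⊕ Fin m)).powersetCard k).filter (fun S => S ⊆ T)
        = T.powersetCard k := by
    intro T
    ext S
    simp only [Finset.mem_filter, Finset.mem_powersetCard, Finset.subset_univ, true_and]
    tauto
  have hdisj : Disjoint
      (((Finset.univ : Finset (Fin m ⊕ Fin m)).powersetCard k).filter (fun S => S ⊆ Lf m))
      (((Finset.univ : Finset (Fin m ⊕ Fin m)).powersetCard k).filter (fun S => S ⊆ Rf m)) := by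
    rw [Finset.disjoint_left]
    intro S h1 h2
    simp only [Finset.mem_filter, Finset.mem_powersetCard] at h1 h2
    obtain ⟨x, hx⟩ := Finset.card_pos.mp (by omega : 0 < S.card)
    have hxL := h1.2 hx
    have hxR := h2.2 hx
    simp [Lf, Rf] at hxL hxR
    obtain ⟨a, rfl⟩ := hxL
    obtain ⟨b, hb⟩ := hxR
    exact absurd hb (by simp)
  have hor : (((Finset.univ : Finset (Fin m ⊕ Fin m)).powersetCard k).filter
      (fun S => S ⊆ Lf m ∨ S ⊆ Rf m)).card = m.choose k + m.choose k := by
    rw [Finset.filter_or, Finset.card_union_of_disjoint hdisj, hI, hI,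
      Finset.card_powersetCard, Finset.card_powersetCard]
    simp [Lf, Rf]
  rw [← htot, ← hsplit, hneg, hor]

lemma no_iso_side {m n : ℕ} (S : Finset (Fin m ⊕ Fin m))
    (h : S ⊆ Lf m ∨ S ⊆ Rf m) (F : SimpleGraph (Fin n)) {i j : Fin n} (hF : F.Adj i j) :
    ¬ Nonempty ((completeBipartiteGraph (Fin m) (Fin m)).induce
      (↑S : Set (Fin m ⊕ Fin m)) ≃g F) := by
  apply no_iso_of_no_adj_aux _ _ _ _ hF
  intro x hx y hy hadj
  rcases h with h | h
  · have h1 := h hx; have h2 := h hy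
    cases x <;> cases y <;> simp_all [Lf]
  · have h1 := h hx; have h2 := h hy
    cases x <;> cases y <;> simp_all [Rf]

lemma char3 {m : ℕ} (S : Finset (Fin m ⊕ Fin m)) (h3 : S.card = 3) :
    Nonempty ((completeBipartiteGraph (Fin m) (Fin m)).induce
        (↑S : Set (Fin m ⊕ Fin m)) ≃g P3)
      ↔ (¬ S ⊆ Lf m ∧ ¬ S ⊆ Rf m) := by
  set G := completeBipartiteGraph (Fin m) (Fin m) with hG
  have hP : P3.Adj 0 1 := by
    rw [show P3.Adj 0 1 ↔ _ from SimpleGraph.fromRel_adj _ 0 1]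
    exact ⟨by decide, Or.inl (Or.inl ⟨rfl, rfl⟩)⟩
  constructor
  · intro hiso
    constructor <;> intro hsub <;> exact no_iso_side S (by tauto) P3 hP hiso
  · rintro ⟨hL, hR⟩
    obtain ⟨u, v, w, huv, huw, hvw, hS⟩ := Finset.card_eq_three.mp h3
    have adj : ∀ (a b : Fin m), G.Adj (Sum.inl a) (Sum.inr b) := by intro a b; simp [hG]
    have nadjL : ∀ (a b : Fin m), ¬ G.Adj (Sum.inl a) (Sum.inl b) := by intro a b; simp [hG]
    have nadjR : ∀ (a b : Fin m), ¬ G.Adj (Sum.inr a) (Sum.inr b) := by intro a b; simp [hG]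
    rcases u with a | a <;> rcases v with b | b <;> rcases w with c | c
    · exfalso; apply hL; rw [hS]; intro x hx
      simp only [Finset.mem_insert, Finset.mem_singleton] at hx
      rcases hx with rfl | rfl | rfl <;> simp [Lf]
    · exact iso_P3_aux G S (by simp) huv (by simp)
        (by rw [hS]; try (ext t; simp only [Finset.mem_insert, Finset.mem_singleton]; try tauto))
        (adj a c) ((adj b c).symm) (nadjL a b)
    · exact iso_P3_aux G S huv huw (by simp)
        (by rw [hS]; try (ext t; simp only [Finset.mem_insert, Finset.mem_singleton]; try tauto))
        (adj a b) ((adj c b).symm) (nadjL a c)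
    · exact iso_P3_aux G S (by simp) hvw (by simp)
        (by rw [hS]; try (ext t; simp only [Finset.mem_insert, Finset.mem_singleton]; try tauto))
        ((adj a b).symm) (adj a c) (nadjR b c)
    · exact iso_P3_aux G S (by simp) hvw (by simp)
        (by rw [hS]; try (ext t; simp only [Finset.mem_insert, Finset.mem_singleton]; try tauto))
        (adj b a) ((adj c a).symm) (nadjL b c)
    · exact iso_P3_aux G S huv huw (by simp)
        (by rw [hS]; try (ext t; simp only [Finset.mem_insert, Finset.mem_singleton]; try tauto))
        ((adj b a).symm) (adj b c) (nadjR a c)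
    · exact iso_P3_aux G S (by simp) huv (by simp)
        (by rw [hS]; try (ext t; simp only [Finset.mem_insert, Finset.mem_singleton]; try tauto))
        ((adj c a).symm) (adj c b) (nadjR a b)
    · exfalso; apply hR; rw [hS]; intro x hx
      simp only [Finset.mem_insert, Finset.mem_singleton] at hx
      rcases hx with rfl | rfl | rfl <;> simp [Rf]

lemma char2 {m : ℕ} (S : Finset (Fin m ⊕ Fin m)) (h2 : S.card = 2) :
    Nonempty ((completeBipartiteGraph (Fin m) (Fin m)).induce (↑S : Set (Fin m ⊕ Fin m))
        ≃g (⊤ : SimpleGraph (Fin 2)))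
      ↔ (¬ S ⊆ Lf m ∧ ¬ S ⊆ Rf m) := by
  set G := completeBipartiteGraph (Fin m) (Fin m) with hG
  have hT : (⊤ : SimpleGraph (Fin 2)).Adj 0 1 := by decide
  constructor
  · intro hiso
    constructor <;> intro hsub <;> exact no_iso_side S (by tauto) _ hT hiso
  · rintro ⟨hL, hR⟩
    obtain ⟨u, v, huv, hS⟩ := Finset.card_eq_two.mp h2
    have adj : ∀ (a b : Fin m), G.Adj (Sum.inl a) (Sum.inr b) := by intro a b; simp [hG]
    rcases u with a | a <;> rcases v with b | b
    · exfalso; apply hL; rw [hS]; intro x hx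
      simp only [Finset.mem_insert, Finset.mem_singleton] at hx
      rcases hx with rfl | rfl <;> simp [Lf]
    · exact iso_K2_aux G S huv
        (by rw [hS]; try (ext t; simp only [Finset.mem_insert, Finset.mem_singleton]; try tauto))
        (adj a b)
    · exact iso_K2_aux G S (by simp)
        (by rw [hS]; try (ext t; simp only [Finset.mem_insert, Finset.mem_singleton]; try tauto))
        (adj b a)
    · exfalso; apply hR; rw [hS]; intro x hx
      simp only [Finset.mem_insert, Finset.mem_singleton] at hx
      rcases hx with rfl | rfl <;> simp [Rf]

lemma cast_choose_three (n : ℕ) (hn : 2 ≤ n) :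
    (n.choose 3 : ℝ) = n*((n:ℝ)-1)*((n:ℝ)-2)/6 := by
  have h := Nat.descFactorial_eq_factorial_mul_choose n 3
  have h2 : n.descFactorial 3 = (n-2) * ((n-1) * n) := by
    simp [Nat.descFactorial]
  have h' : ((n:ℕ)-2) * ((n-1) * n) = 6 * n.choose 3 := by
    rw [← h2, h]; norm_num [Nat.factorial]
  have hr := congrArg (Nat.cast : ℕ → ℝ) h'
  push_cast [Nat.cast_sub (by omega : 1 ≤ n), Nat.cast_sub hn] at hr
  linarith

lemma cast_choose_two' (n : ℕ) (hn : 1 ≤ n) :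
    (n.choose 2 : ℝ) = n*((n:ℝ)-1)/2 := by
  rw [Nat.cast_choose_two]

lemma lim_main : Tendsto (fun m : ℕ => 3*(m:ℝ)/(4*m-2)) atTop (nhds (3/4)) := by
  have h : Tendsto (fun m : ℕ => ((m:ℝ))⁻¹) atTop (nhds 0) :=
    tendsto_inv_atTop_nhds_zero_nat
  have hd : Tendsto (fun m : ℕ => 4 - 2*((m:ℝ))⁻¹) atTop (nhds 4) := by
    have := tendsto_const_nhds (x := (4:ℝ)) (f := atTop (α := ℕ))
    simpa using this.sub (h.const_mul 2)
  have hq : Tendsto (fun m : ℕ => 3/(4 - 2*((m:ℝ))⁻¹)) atTop (nhds (3/4)) := by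
    have := Filter.Tendsto.div
      (tendsto_const_nhds : Tendsto (fun _ : ℕ => (3:ℝ)) atTop (nhds 3)) hd (by norm_num)
    exact this
  refine hq.congr' ?_
  filter_upwards [eventually_ge_atTop 1] with m hm
  have hm' : (1:ℝ) ≤ (m:ℝ) := by exact_mod_cast hm
  have h0 : (m:ℝ) ≠ 0 := by positivity
  have hinv : ((m:ℝ))⁻¹ ≤ 1 := by
    simpa using inv_anti₀ one_pos hm'
  have h4 : 4 - 2*((m:ℝ))⁻¹ ≠ 0 := by nlinarith
  field_simp
  try ring

lemma lim_edge : Tendsto (fun m : ℕ => (m:ℝ)/(2*m-1)) atTop (nhds (1/2)) := by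
  have h : Tendsto (fun m : ℕ => ((m:ℝ))⁻¹) atTop (nhds 0) :=
    tendsto_inv_atTop_nhds_zero_nat
  have hd : Tendsto (fun m : ℕ => 2 - ((m:ℝ))⁻¹) atTop (nhds 2) := by
    have := tendsto_const_nhds (x := (2:ℝ)) (f := atTop (α := ℕ))
    simpa using this.sub h
  have hq : Tendsto (fun m : ℕ => 1/(2 - ((m:ℝ))⁻¹)) atTop (nhds (1/2)) := by
    exact Filter.Tendsto.div
      (tendsto_const_nhds : Tendsto (fun _ : ℕ => (1:ℝ)) atTop (nhds 1)) hd (by norm_num)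
  refine hq.congr' ?_
  filter_upwards [eventually_ge_atTop 1] with m hm
  have hm' : (1:ℝ) ≤ (m:ℝ) := by exact_mod_cast hm
  have h0 : (m:ℝ) ≠ 0 := by positivity
  have hinv : ((m:ℝ))⁻¹ ≤ 1 := by
    simpa using inv_anti₀ one_pos hm'
  have h4 : 2 - ((m:ℝ))⁻¹ ≠ 0 := by nlinarith
  field_simp
  try ring

lemma freq3 (m : ℕ) (hm : 2 ≤ m) :
    subgraphFreq P3 (completeBipartiteGraph (Fin m) (Fin m)) = 3*(m:ℝ)/(4*m-2) := by
  have hcard : Fintype.card (Fin m ⊕ Fin m) = m + m := by simp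
  have hc3 : Fintype.card (Fin 3) = 3 := by simp
  rw [subgraphFreq_eq]
  simp only [hc3, hcard]
  have hfe : ((Finset.univ : Finset (Fin m ⊕ Fin m)).powersetCard 3).filter
      (fun S : Finset (Fin m ⊕ Fin m) => Nonempty ((completeBipartiteGraph (Fin m) (Fin m)).induce
        (↑S : Set (Fin m ⊕ Fin m)) ≃g P3))
      = ((Finset.univ : Finset (Fin m ⊕ Fin m)).powersetCard 3).filter
        (fun S => ¬ S ⊆ Lf m ∧ ¬ S ⊆ Rf m) :=
    Finset.filter_congr (fun S hS => char3 S (Finset.mem_powersetCard_univ.mp hS))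
  rw [hfe]
  have hc := count_eq m 3 (by norm_num)
  have hNr : ((((Finset.univ : Finset (Fin m ⊕ Fin m)).powersetCard 3).filter
      (fun S => ¬ S ⊆ Lf m ∧ ¬ S ⊆ Rf m)).card : ℝ)
      = ((m+m).choose 3 : ℝ) - (m.choose 3 + m.choose 3) := by
    have := congrArg (Nat.cast : ℕ → ℝ) hc
    push_cast at this
    linarith
  rw [hNr, cast_choose_three (m+m) (by omega), cast_choose_three m hm]
  have hx : (2:ℝ) ≤ (m:ℝ) := by exact_mod_cast hm
  set x := (m:ℝ) with hxdef
  have h1 : (0:ℝ) < x := by linarith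
  have h2 : (0:ℝ) < x + x - 1 := by linarith
  have h3 : (0:ℝ) < x + x - 2 := by linarith
  have hd : (x+x)*((x+x)-1)*((x+x)-2)/6 ≠ 0 := by positivity
  have hd2 : 4*x - 2 ≠ 0 := by nlinarith
  push_cast
  rw [← hxdef]
  have h5 : x - 1 ≠ 0 := by linarith
  have h6 : 2*x - 1 ≠ 0 := by linarith
  have h7 : x + x - 1 ≠ 0 := by linarith
  have h8 : x + x - 2 ≠ 0 := by linarith
  rw [div_eq_div_iff hd hd2]
  ring

lemma freq2 (m : ℕ) (hm : 2 ≤ m) :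
    subgraphFreq (⊤ : SimpleGraph (Fin 2)) (completeBipartiteGraph (Fin m) (Fin m))
      = (m:ℝ)/(2*m-1) := by
  have hcard : Fintype.card (Fin m ⊕ Fin m) = m + m := by simp
  have hc2 : Fintype.card (Fin 2) = 2 := by simp
  rw [subgraphFreq_eq]
  simp only [hc2, hcard]
  have hfe : ((Finset.univ : Finset (Fin m ⊕ Fin m)).powersetCard 2).filter
      (fun S : Finset (Fin m ⊕ Fin m) => Nonempty ((completeBipartiteGraph (Fin m) (Fin m)).induce
        (↑S : Set (Fin m ⊕ Fin m)) ≃g (⊤ : SimpleGraph (Fin 2))))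
      = ((Finset.univ : Finset (Fin m ⊕ Fin m)).powersetCard 2).filter
        (fun S => ¬ S ⊆ Lf m ∧ ¬ S ⊆ Rf m) :=
    Finset.filter_congr (fun S hS => char2 S (Finset.mem_powersetCard_univ.mp hS))
  rw [hfe]
  have hc := count_eq m 2 (by norm_num)
  have hNr : ((((Finset.univ : Finset (Fin m ⊕ Fin m)).powersetCard 2).filter
      (fun S => ¬ S ⊆ Lf m ∧ ¬ S ⊆ Rf m)).card : ℝ)
      = ((m+m).choose 2 : ℝ) - (m.choose 2 + m.choose 2) := by
    have := congrArg (Nat.cast : ℕ → ℝ) hc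
    push_cast at this
    linarith
  rw [hNr, cast_choose_two' (m+m) (by omega), cast_choose_two' m (by omega)]
  have hx : (2:ℝ) ≤ (m:ℝ) := by exact_mod_cast hm
  set x := (m:ℝ) with hxdef
  have h1 : (0:ℝ) < x := by linarith
  have h2 : (0:ℝ) < x + x - 1 := by linarith
  have hd : (x+x)*((x+x)-1)/2 ≠ 0 := by positivity
  have hd2 : 2*x - 1 ≠ 0 := by nlinarith
  push_cast
  rw [← hxdef]
  field_simp
  ring

/-- In the complete balanced bipartite graphs `K_{m,m}` (i.e. `K_{n/2,n/2}` for even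
`n = 2m`), the induced frequency of the 3-vertex path tends to `3/4` as `m → ∞`,
while the edge density tends to `1/2`: the bound `3/4` is asymptotically tight. -/
theorem stmt6 :
    Filter.Tendsto
      (fun m : ℕ => subgraphFreq P3 (completeBipartiteGraph (Fin m) (Fin m)))
      Filter.atTop (nhds (3/4)) ∧
    Filter.Tendsto
      (fun m : ℕ => subgraphFreq (⊤ : SimpleGraph (Fin 2))
        (completeBipartiteGraph (Fin m) (Fin m)))
      Filter.atTop (nhds (1/2)) := by
  constructor
  · refine lim_main.congr' ?_
    filter_upwards [eventually_ge_atTop 2] with m hm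
    exact (freq3 m hm).symm
  · refine lim_edge.congr' ?_
    filter_upwards [eventually_ge_atTop 2] with m hm
    exact (freq2 m hm).symm
end

section
/- For every k ≥ 3 there exist ε > 0 and n₀ such that: for every k-vertex graph F that is neither complete nor empty, and every graph G on n ≥ n₀ vertices, s(F,G) < 1 − ε. -/
open scoped Classical

open Finset

def myRam : ℕ → ℕ → ℕ
  | 0, _ => 0
  | _+1, 0 => 0
  | a+1, b+1 => myRam a (b+1) + myRam (a+1) b + 1

theorem myRam_spec : ∀ (a b : ℕ) {W : Type*} [DecidableEq W] (G : SimpleGraph W)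
    (T : Finset W), myRam a b ≤ T.card →
    (∃ S ⊆ T, G.IsNClique a S) ∨ (∃ S ⊆ T, Gᶜ.IsNClique b S)
  | 0, _, _, _, _, _, _ => Or.inl ⟨∅, empty_subset _, by simp [SimpleGraph.isNClique_empty]⟩
  | _+1, 0, _, _, _, _, _ => Or.inr ⟨∅, empty_subset _, by simp [SimpleGraph.isNClique_empty]⟩
  | a+1, b+1, W, _, G, T, hT => by
    classical
    have heq : myRam (a+1) (b+1) = myRam a (b+1) + myRam (a+1) b + 1 := by simp [myRam]
    have hpos : 0 < T.card := by omega
    obtain ⟨v, hv⟩ := card_pos.mp hpos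
    set N := (T.erase v).filter (fun w => G.Adj v w) with hN
    set M := (T.erase v).filter (fun w => ¬ G.Adj v w) with hM
    have hcard : N.card + M.card = T.card - 1 := by
      rw [hN, hM, card_filter_add_card_filter_not, card_erase_of_mem hv]
    have hsplit : myRam a (b+1) ≤ N.card ∨ myRam (a+1) b ≤ M.card := by
      by_contra h
      push_neg at h
      have := heq
      omega
    rcases hsplit with hle | hle
    · rcases myRam_spec a (b+1) G N hle with ⟨S, hS, hcl⟩ | ⟨S, hS, hcl⟩
      · refine Or.inl ⟨insert v S, ?_, hcl.insert ?_⟩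
        · intro x hx
          rcases mem_insert.mp hx with rfl | hx
          · exact hv
          · exact (erase_subset _ _) (filter_subset _ _ (hS hx))
        · intro w hw
          exact (mem_filter.mp (hS hw)).2
      · exact Or.inr ⟨S, hS.trans ((filter_subset _ _).trans (erase_subset _ _)), hcl⟩
    · rcases myRam_spec (a+1) b G M hle with ⟨S, hS, hcl⟩ | ⟨S, hS, hcl⟩
      · exact Or.inl ⟨S, hS.trans ((filter_subset _ _).trans (erase_subset _ _)), hcl⟩
      · refine Or.inr ⟨insert v S, ?_, hcl.insert ?_⟩
        · intro x hx
          rcases mem_insert.mp hx with rfl | hx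
          · exact hv
          · exact (erase_subset _ _) (filter_subset _ _ (hS hx))
        · intro w hw
          have hw' := mem_filter.mp (hS hw)
          have hne : v ≠ w := (ne_of_mem_erase hw'.1).symm
          exact ⟨hne, hw'.2⟩

/-- A clique does not induce a non-complete graph. -/
lemma clique_no_induce {k : ℕ} {W : Type*} (G : SimpleGraph W) (S : Finset W)
    (h : G.IsNClique k S) (F : SimpleGraph (Fin k)) (hF : F ≠ ⊤) :
    ¬ Nonempty (G.induce (↑S : Set W) ≃g F) := by
  rintro ⟨e⟩
  apply hF
  ext x y
  simp only [SimpleGraph.top_adj]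
  constructor
  · exact fun h' => h'.ne
  · intro hxy
    have hne : e.symm x ≠ e.symm y := fun hc => hxy (e.symm.injective hc)
    have hne' : ((e.symm x : ↑(↑S : Set W)) : W) ≠ ((e.symm y : ↑(↑S : Set W)) : W) :=
      fun hc => hne (Subtype.ext hc)
    have hadj : G.Adj (e.symm x) (e.symm y) :=
      h.1 (by simpa using (e.symm x).2) (by simpa using (e.symm y).2) hne'
    have : (G.induce (↑S : Set W)).Adj (e.symm x) (e.symm y) := hadj
    simpa using e.symm.map_adj_iff.mp this

/-- An independent set does not induce a non-empty graph. -/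
lemma indep_no_induce {k : ℕ} {W : Type*} (G : SimpleGraph W) (S : Finset W)
    (h : Gᶜ.IsNClique k S) (F : SimpleGraph (Fin k)) (hF : F ≠ ⊥) :
    ¬ Nonempty (G.induce (↑S : Set W) ≃g F) := by
  rintro ⟨e⟩
  apply hF
  ext x y
  simp only [SimpleGraph.bot_adj, iff_false]
  intro hxy
  have hne : e.symm x ≠ e.symm y := fun hc => hxy.ne (e.symm.injective hc)
  have hne' : ((e.symm x : ↑(↑S : Set W)) : W) ≠ ((e.symm y : ↑(↑S : Set W)) : W) :=
    fun hc => hne (Subtype.ext hc)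
  have hnadj : Gᶜ.Adj (e.symm x) (e.symm y) :=
    h.1 (by simpa using (e.symm x).2) (by simpa using (e.symm y).2) hne'
  have hadj : (G.induce (↑S : Set W)).Adj (e.symm x) (e.symm y) := e.symm.map_adj_iff.mpr hxy
  exact hnadj.2 hadj

/-- Number of `m`-element supersets of a `k`-element set. -/
lemma card_supersets {n k m : ℕ} (S : Finset (Fin n)) (hSk : S.card = k) (hkm : k ≤ m) :
    (((univ : Finset (Fin n)).powersetCard m).filter (fun T => S ⊆ T)).card
      = (n - k).choose (m - k) := by
  classical
  have hcompl : (Sᶜ : Finset (Fin n)).card = n - k := by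
    rw [card_compl, hSk, Fintype.card_fin]
  rw [← hcompl, ← card_powersetCard]
  apply card_bij' (fun T _ => T \ S) (fun U _ => U ∪ S)
  · intro T hT
    simp only [mem_filter, mem_powersetCard] at hT
    simp only [mem_powersetCard]
    constructor
    · intro x hx
      simp only [mem_sdiff] at hx
      simpa [mem_compl] using hx.2
    · rw [card_sdiff_of_subset hT.2, hT.1.2, hSk]
  · intro U hU
    simp only [mem_powersetCard] at hU
    simp only [mem_filter, mem_powersetCard]
    have hdisj : Disjoint U S := by
      rw [disjoint_right]
      intro x hxS hxU
      have := hU.1 hxU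
      simp [mem_compl] at this
      exact this hxS
    refine ⟨⟨subset_univ _, ?_⟩, subset_union_right⟩
    rw [card_union_of_disjoint hdisj, hU.2, hSk]
    omega
  · intro T hT
    simp only [mem_filter, mem_powersetCard] at hT
    exact sdiff_union_of_subset hT.2
  · intro U hU
    simp only [mem_powersetCard] at hU
    ext x
    simp only [mem_sdiff, mem_union]
    constructor
    · rintro ⟨hx | hx, hxS⟩
      · exact hx
      · exact absurd hx hxS
    · intro hx
      refine ⟨Or.inl hx, ?_⟩
      have := hU.1 hx
      simpa [mem_compl] using this


lemma do_eq_image {W : Type*} (s : Finset (Finset W)) :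
    (do let a ← s; pure (↑a : Set W) : Finset (Set W))
      = s.image (fun (a : Finset W) => (↑a : Set W)) := by
  show s.sup (fun a => {(↑a : Set W)}) = _
  ext x
  simp [Finset.mem_sup, eq_comm]

lemma card_filter_coe {W : Type*} (s : Finset (Finset W)) (p : Set W → Prop) :
    ((do let a ← s; pure (↑a : Set W) : Finset (Set W)).filter p).card
      = (s.filter (fun (a : Finset W) => p (↑a : Set W))).card := by
  classical
  rw [do_eq_image]
  rw [filter_image (f := fun (a : Finset W) => (↑a : Set W)) (p := p) (s := s)]
  exact Finset.card_image_of_injective _ (fun a b h => by simpa using h)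

lemma main_count {k n : ℕ} (hk : 3 ≤ k) (F : SimpleGraph (Fin k)) (hFt : F ≠ ⊤) (hFb : F ≠ ⊥)
    (hn : myRam k k + k ≤ n) (G : SimpleGraph (Fin n)) :
    (((Finset.univ : Finset (Fin n)).powersetCard k).filter
        (fun (S : Finset (Fin n)) => Nonempty (G.induce (↑S : Set (Fin n)) ≃g F))).card * ((myRam k k + k).choose k)
      ≤ ((myRam k k + k).choose k - 1) * n.choose k := by
  classical
  set m := myRam k k + k with hm
  set A := ((Finset.univ : Finset (Fin n)).powersetCard k).filter
      (fun (S : Finset (Fin n)) => Nonempty (G.induce (↑S : Set (Fin n)) ≃g F)) with hA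
  have hkm : k ≤ m := Nat.le_add_left _ _
  have hmn : m ≤ n := hn
  have hAcard : ∀ S ∈ A, S.card = k := by
    intro S hS
    exact (mem_powersetCard.mp (mem_filter.mp hS).1).2
  -- Step 1: every m-set contains a k-subset not in A (by Ramsey).
  have step1 : ∀ T ∈ (univ : Finset (Fin n)).powersetCard m,
      (A.filter (fun S => S ⊆ T)).card ≤ m.choose k - 1 := by
    intro T hT
    rw [mem_powersetCard] at hT
    have hbad := myRam_spec k k G T (by rw [hT.2]; omega)
    have hex : ∃ S, S ∈ T.powersetCard k ∧ S ∉ A.filter (fun S => S ⊆ T) := by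
      rcases hbad with ⟨S, hST, hcl⟩ | ⟨S, hST, hcl⟩
      · refine ⟨S, mem_powersetCard.mpr ⟨hST, hcl.2⟩, ?_⟩
        intro hmem
        have := (mem_filter.mp (mem_filter.mp hmem).1).2
        exact clique_no_induce G S hcl F hFt this
      · refine ⟨S, mem_powersetCard.mpr ⟨hST, hcl.2⟩, ?_⟩
        intro hmem
        have := (mem_filter.mp (mem_filter.mp hmem).1).2
        exact indep_no_induce G S hcl F hFb this
    obtain ⟨S, hS1, hS2⟩ := hex
    have hsub : A.filter (fun S => S ⊆ T) ⊆ T.powersetCard k := by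
      intro S' hS'
      rw [mem_filter] at hS'
      exact mem_powersetCard.mpr ⟨hS'.2, hAcard S' hS'.1⟩
    have hlt : (A.filter (fun S => S ⊆ T)).card < (T.powersetCard k).card :=
      card_lt_card ((ssubset_iff_of_subset hsub).mpr ⟨S, hS1, hS2⟩)
    rw [card_powersetCard, hT.2] at hlt
    omega
  -- Step 2: double counting.
  have step2 : A.card * ((n - k).choose (m - k)) ≤ (m.choose k - 1) * n.choose m := by
    calc A.card * ((n - k).choose (m - k))
        = ∑ S ∈ A, (((univ : Finset (Fin n)).powersetCard m).filter (fun T => S ⊆ T)).card := by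
          rw [Finset.sum_congr rfl (fun S hS => card_supersets S (hAcard S hS) hkm),
            sum_const, smul_eq_mul]
      _ = ∑ T ∈ (univ : Finset (Fin n)).powersetCard m,
            (A.filter (fun S => S ⊆ T)).card := by
          simp_rw [card_filter]
          exact Finset.sum_comm
      _ ≤ ∑ _T ∈ (univ : Finset (Fin n)).powersetCard m, (m.choose k - 1) :=
          Finset.sum_le_sum step1
      _ = (m.choose k - 1) * n.choose m := by
          rw [sum_const, card_powersetCard, card_univ, Fintype.card_fin, smul_eq_mul, mul_comm]
  -- Step 3: the subset-of-subset binomial identity.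
  have hid : n.choose m * m.choose k = n.choose k * ((n - k).choose (m - k)) :=
    Nat.choose_mul hkm
  have hpos : 0 < n.choose m := Nat.choose_pos hmn
  apply Nat.le_of_mul_le_mul_right _ hpos
  calc A.card * m.choose k * n.choose m
      = A.card * (n.choose m * m.choose k) := by ring
    _ = A.card * (n.choose k * ((n - k).choose (m - k))) := by rw [hid]
    _ = A.card * ((n - k).choose (m - k)) * n.choose k := by ring
    _ ≤ ((m.choose k - 1) * n.choose m) * n.choose k := Nat.mul_le_mul_right _ step2
    _ = (m.choose k - 1) * n.choose k * n.choose m := by ring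

/-- For every `k ≥ 3` there exist `ε > 0` and `n₀` such that every k-vertex graph
`F` that is neither complete nor empty has induced frequency `s(F,G) < 1 − ε` in
every graph `G` on `n ≥ n₀` vertices. -/
theorem stmt11 (k : ℕ) (hk : 3 ≤ k) :
    ∃ ε : ℝ, 0 < ε ∧ ∃ n₀ : ℕ,
      ∀ F : SimpleGraph (Fin k), F ≠ ⊤ → F ≠ ⊥ →
        ∀ n : ℕ, n₀ ≤ n → ∀ G : SimpleGraph (Fin n),
          subgraphFreq F G < 1 - ε := by
  set m := myRam k k + k with hm
  have hkm : k ≤ m := Nat.le_add_left _ _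
  have hC1 : 1 ≤ m.choose k := Nat.choose_pos hkm
  have hC : (0 : ℝ) < (m.choose k : ℝ) := by exact_mod_cast hC1
  refine ⟨1 / (2 * (m.choose k : ℝ)), by positivity, m, ?_⟩
  intro F hFt hFb n hn G
  have hmn : m ≤ n := hn
  have hnk : (0 : ℝ) < (n.choose k : ℝ) := by
    exact_mod_cast Nat.choose_pos (hkm.trans hmn)
  rw [subgraphFreq]
  simp only [Fintype.card_fin]
  rw [card_filter_coe]
  rw [div_lt_iff₀ hnk]
  have key := main_count hk F hFt hFb hn G
  have keyR : ((((Finset.univ : Finset (Fin n)).powersetCard k).filter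
        (fun (S : Finset (Fin n)) => Nonempty (G.induce (↑S : Set (Fin n)) ≃g F))).card : ℝ) * (m.choose k : ℝ)
      ≤ ((m.choose k : ℝ) - 1) * (n.choose k : ℝ) := by
    have : (((m.choose k - 1) * n.choose k : ℕ) : ℝ)
        = ((m.choose k : ℝ) - 1) * (n.choose k : ℝ) := by
      push_cast [Nat.cast_sub hC1]
      ring
    rw [← this]
    exact_mod_cast key
  set a : ℝ := ((((Finset.univ : Finset (Fin n)).powersetCard k).filter
      (fun (S : Finset (Fin n)) => Nonempty (G.induce (↑S : Set (Fin n)) ≃g F))).card : ℝ) with ha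
  have h2C : (0 : ℝ) < 2 * (m.choose k : ℝ) := by positivity
  rw [← mul_lt_mul_iff_of_pos_right h2C]
  have hrhs : (1 - 1 / (2 * (m.choose k : ℝ))) * (n.choose k : ℝ) * (2 * (m.choose k : ℝ))
      = 2 * (m.choose k : ℝ) * (n.choose k : ℝ) - (n.choose k : ℝ) := by
    field_simp
  rw [hrhs]
  nlinarith [keyR, hnk]
end
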